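/- arXiv:2102.05782 — 8 statements merged into one kernel-verified Lean document; each statement's English description precedes it below -/
import Mathlib

section
/- For a monotone submodular function f on a finite ground set V (with f(∅) ≥ 0), if X is a set, O is a set of cardinality k ≥ 1, and x is an element maximizing the marginal gain f(X ∪ {x}) - f(X) over all elements of O, then f(X ∪ {x}) - f(X) ≥ (f(O) - f(X))/k. -/
def Submodular {V : Type*} [DecidableEq V] (f : Finset V → ℝ) : Prop :=
  ∀ S T : Finset V, S ⊆ T → ∀ i ∉ T, f (insert i S) - f S ≥ f (insert i T) - f T

def MonotoneF {V : Type*} [DecidableEq V] (f : Finset V → ℝ) : Prop :=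
  ∀ S T : Finset V, S ⊆ T → f S ≤ f T

lemma key {V : Type*} [DecidableEq V] (f : Finset V → ℝ)
    (hsub : Submodular f) (X : Finset V) :
    ∀ O : Finset V, f (X ∪ O) - f X ≤ ∑ y ∈ O, (f (insert y X) - f X) := by
  intro O
  induction O using Finset.induction_on with
  | empty => simp
  | @insert a S ha ih =>
    rw [Finset.sum_insert ha]
    by_cases haX : a ∈ X
    · have h1 : X ∪ insert a S = X ∪ S := by
        rw [Finset.union_insert, Finset.insert_eq_self.mpr (Finset.mem_union_left S haX)]
      have h2 : insert a X = X := Finset.insert_eq_self.mpr haX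
      rw [h1, h2]
      linarith
    · have hXS : X ∪ insert a S = insert a (X ∪ S) := Finset.union_insert a X S
      have haXS : a ∉ X ∪ S := by simp [haX, ha]
      have := hsub X (X ∪ S) Finset.subset_union_left a haXS
      rw [hXS]
      linarith

theorem stmt0 {V : Type*} [DecidableEq V] (f : Finset V → ℝ)
    (hsub : Submodular f) (hmono : MonotoneF f) (h0 : f ∅ ≥ 0)
    (X O : Finset V) (k : ℕ) (hk : 1 ≤ k) (hO : O.card = k)
    (x : V) (hx : x ∈ O)
    (hmax : ∀ y ∈ O, f (insert y X) - f X ≤ f (insert x X) - f X) :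
    f (insert x X) - f X ≥ (f O - f X) / k := by
  have h1 : f O ≤ f (X ∪ O) := hmono _ _ Finset.subset_union_right
  have h2 := key f hsub X O
  have h3 : ∑ y ∈ O, (f (insert y X) - f X) ≤ k * (f (insert x X) - f X) := by
    calc ∑ y ∈ O, (f (insert y X) - f X) ≤ ∑ _y ∈ O, (f (insert x X) - f X) :=
          Finset.sum_le_sum hmax
      _ = k * (f (insert x X) - f X) := by rw [Finset.sum_const, hO]; push_cast; ring
  have hkpos : (0 : ℝ) < k := by positivity
  rw [ge_iff_le, div_le_iff₀ hkpos]
  linarith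
end

section
/- Let f be monotone submodular with f(∅) = 0, and suppose a sequence of sets X₀ = ∅ ⊆ X₁ ⊆ X₂ ⊆ ... satisfies f(Xᵢ) - f(Xᵢ₋₁) ≥ (1/k₂)·(f(O) - f(Xᵢ₋₁)) for all i, where f(O) ≥ 0. Then for integers 0 ≤ k ≤ k₁ ≤ k₂ with k₁ = θ·k₂ and k = η·k₁ (where θ ≥ 0 and 0 ≤ η ≤ 1), it holds that f(X_{k₁}) ≥ (1 - e^{θη - θ})·f(O) + e^{θη - θ}·f(X_k). -/
theorem stmt3 {V : Type*} [DecidableEq V] (f : Finset V → ℝ)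
    (hsub : Submodular f) (hmono : MonotoneF f) (h0 : f ∅ = 0)
    (O : Finset V) (hO : f O ≥ 0)
    (X : ℕ → Finset V) (hX0 : X 0 = ∅) (hchain : ∀ i : ℕ, X i ⊆ X (i + 1))
    (k k₁ k₂ : ℕ) (hk : k ≤ k₁) (hk12 : k₁ ≤ k₂) (hk2pos : 0 < k₂)
    (hstep : ∀ i : ℕ, 1 ≤ i → i ≤ k₁ →
      f (X i) - f (X (i - 1)) ≥ (f O - f (X (i - 1))) / (k₂ : ℝ))
    (θ η : ℝ) (hθ : (k₁ : ℝ) = θ * k₂) (hη : (k : ℝ) = η * k₁)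
    (hθ0 : 0 ≤ θ) (hη0 : 0 ≤ η) (hη1 : η ≤ 1) :
    f (X k₁) ≥ (1 - Real.exp (θ * η - θ)) * f O + Real.exp (θ * η - θ) * f (X k) := by
  have hk2R : (0:ℝ) < (k₂:ℝ) := by exact_mod_cast hk2pos
  set t : ℝ := θ * η - θ with ht
  have hmonoX : ∀ a b : ℕ, a ≤ b → f (X a) ≤ f (X b) := by
    intro a b hab
    have hsub' : X a ⊆ X b := by
      induction b with
      | zero => simp_all
      | succ n ih =>
        rcases Nat.lt_or_ge a (n+1) with h | h
        · exact (ih (Nat.lt_succ_iff.mp h)).trans (hchain n)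
        · have : a = n + 1 := le_antisymm hab h
          simp [this]
    exact hmono _ _ hsub'
  have ht0 : t ≤ 0 := by
    have : θ * η ≤ θ * 1 := mul_le_mul_of_nonneg_left hη1 hθ0
    simp at this; linarith
  have hexp1 : Real.exp t ≤ 1 := Real.exp_le_one_iff.mpr ht0
  rcases le_or_gt (f O) (f (X k)) with hcase | hcase
  · -- f O ≤ f (X k): target is ≤ f (X k) ≤ f (X k₁)
    have h1 : (1 - Real.exp t) * f O + Real.exp t * f (X k) ≤ f (X k) := by
      nlinarith [Real.exp_pos t]
    exact le_trans h1 (hmonoX k k₁ hk)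
  · -- main case
    have hq0 : (0:ℝ) ≤ 1 - 1/(k₂:ℝ) := by
      rw [sub_nonneg, div_le_one hk2R]
      exact_mod_cast hk2pos
    have key : ∀ n : ℕ, k + n ≤ k₁ →
        f O - f (X (k + n)) ≤ (1 - 1/(k₂:ℝ))^n * (f O - f (X k)) := by
      intro n
      induction n with
      | zero => simp
      | succ m ih =>
        intro hle
        have ihm := ih (by omega)
        have hs := hstep (k + m + 1) (by omega) (by omega)
        simp only [Nat.add_sub_cancel] at hs
        have h2 : f O - f (X (k + (m+1))) ≤ (1 - 1/(k₂:ℝ)) * (f O - f (X (k + m))) := by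
          have : k + (m + 1) = k + m + 1 := by ring
          rw [this]
          have heq : (1 - 1/(k₂:ℝ)) * (f O - f (X (k + m)))
              = (f O - f (X (k + m))) - (f O - f (X (k + m))) / (k₂:ℝ) := by ring
          linarith
        calc f O - f (X (k + (m+1))) ≤ (1 - 1/(k₂:ℝ)) * (f O - f (X (k + m))) := h2
          _ ≤ (1 - 1/(k₂:ℝ)) * ((1 - 1/(k₂:ℝ))^m * (f O - f (X k))) :=
              mul_le_mul_of_nonneg_left ihm hq0
          _ = (1 - 1/(k₂:ℝ))^(m+1) * (f O - f (X k)) := by ring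
    have hkey := key (k₁ - k) (by omega)
    rw [Nat.add_sub_cancel' hk] at hkey
    have hpow : (1 - 1/(k₂:ℝ))^(k₁ - k) ≤ Real.exp t := by
      have h1 : (1 - 1/(k₂:ℝ)) ≤ Real.exp (-(1/(k₂:ℝ))) := by
        have := Real.add_one_le_exp (-(1/(k₂:ℝ)))
        linarith
      calc (1 - 1/(k₂:ℝ))^(k₁ - k) ≤ (Real.exp (-(1/(k₂:ℝ))))^(k₁ - k) :=
            pow_le_pow_left₀ hq0 h1 _
        _ = Real.exp ((k₁ - k : ℕ) * (-(1/(k₂:ℝ)))) := by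
            rw [← Real.exp_nat_mul]
        _ = Real.exp t := by
            congr 1
            have hc : ((k₁ - k : ℕ) : ℝ) = (k₁ : ℝ) - k := by
              push_cast [Nat.cast_sub hk]; ring
            rw [hc, hθ, hη, hθ]
            field_simp
            ring
    have hD : 0 ≤ f O - f (X k) := by linarith
    have : f O - f (X k₁) ≤ Real.exp t * (f O - f (X k)) :=
      hkey.trans (mul_le_mul_of_nonneg_right hpow hD)
    linarith
end

section
/- If a sequence a₀ = 0, a₁, a₂, ... of reals satisfies aᵢ - aᵢ₋₁ ≥ (M - aᵢ₋₁)/k for all i ≥ 1 (with M ≥ 0 and integer k ≥ 1), then for all i, M - aᵢ ≤ (1 - 1/k)^i · M; in particular a_k ≥ (1 - (1-1/k)^k)·M ≥ (1 - 1/e)·M. -/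
theorem stmt4 (M : ℝ) (hM : 0 ≤ M) (k : ℕ) (hk : 1 ≤ k)
    (a : ℕ → ℝ) (ha0 : a 0 = 0)
    (hstep : ∀ i : ℕ, 1 ≤ i → a i - a (i - 1) ≥ (M - a (i - 1)) / (k : ℝ)) :
    (∀ i : ℕ, M - a i ≤ (1 - 1 / (k : ℝ)) ^ i * M) ∧
    a k ≥ (1 - (1 - 1 / (k : ℝ)) ^ k) * M ∧
    a k ≥ (1 - 1 / Real.exp 1) * M := by
  have hk1 : (1:ℝ) ≤ (k:ℝ) := by exact_mod_cast hk
  have hkpos : (0:ℝ) < (k:ℝ) := lt_of_lt_of_le one_pos hk1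
  have hq0 : (0:ℝ) ≤ 1 - 1 / (k:ℝ) := by
    rw [sub_nonneg, div_le_one hkpos]; exact hk1
  have main : ∀ i : ℕ, M - a i ≤ (1 - 1 / (k : ℝ)) ^ i * M := by
    intro i
    induction i with
    | zero => simp [ha0]
    | succ n ih =>
      have h := hstep (n+1) (by omega)
      simp only [Nat.add_sub_cancel] at h
      have key : M - a (n+1) ≤ (1 - 1/(k:ℝ)) * (M - a n) := by
        have : (M - a n) / (k:ℝ) ≤ a (n+1) - a n := h
        have e : (1 - 1/(k:ℝ)) * (M - a n) = (M - a n) - (M - a n)/(k:ℝ) := by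
          field_simp
        linarith
      calc M - a (n+1) ≤ (1 - 1/(k:ℝ)) * (M - a n) := key
        _ ≤ (1 - 1/(k:ℝ)) * ((1 - 1/(k:ℝ))^n * M) := by
            exact mul_le_mul_of_nonneg_left ih hq0
        _ = (1 - 1/(k:ℝ))^(n+1) * M := by ring
  refine ⟨main, ?_, ?_⟩
  · have := main k; linarith
  · have h1 : (1 - 1/(k:ℝ)) ≤ Real.exp (-(1/(k:ℝ))) := by
      have := Real.add_one_le_exp (-(1/(k:ℝ))); linarith
    have h2 : (1 - 1/(k:ℝ))^k ≤ Real.exp (-(1/(k:ℝ)))^k :=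
      pow_le_pow_left₀ hq0 h1 k
    have h3 : Real.exp (-(1/(k:ℝ)))^k = Real.exp (-1) := by
      rw [← Real.exp_nat_mul]
      congr 1
      field_simp
    have h4 : (1 - 1/(k:ℝ))^k ≤ 1 / Real.exp 1 := by
      have h5 : Real.exp (-1) = 1 / Real.exp 1 := by
        rw [Real.exp_neg, inv_eq_one_div]
      linarith [h2.trans_eq h3, h5.le]
    have := main k; nlinarith [this]
end

section
/- There exists a monotone submodular function f on the ground set {1,2,3,4} (namely f(∅)=0, f({1})=1, f({2})=f({3})=f({4})=1/2, f({1,j})=7/6 for j∈{2,3,4}, f({i,j})=1 for distinct i,j∈{2,3,4}, f({2,3,4})=3/2, f of any 3-set containing 1 equals 4/3, f({1,2,3,4})=3/2) such that, letting O_l denote a maximizer of f over sets of size l, f(O₃) - f(O₂) > f(O₂) - f(O₁). -/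
def g (S : Finset (Fin 4)) : ℤ :=
  if 0 ∈ S then
    if S.card = 1 then 6 else if S.card = 2 then 7 else if S.card = 3 then 8 else 9
  else
    if S.card = 0 then 0 else if S.card = 1 then 3 else if S.card = 2 then 6 else 9

lemma gsub : ∀ S T : Finset (Fin 4), S ⊆ T → ∀ i ∉ T,
    g (insert i S) - g S ≥ g (insert i T) - g T := by decide
lemma gmono : ∀ S T : Finset (Fin 4), S ⊆ T → g S ≤ g T := by decide
lemma gmax1 : ∀ S : Finset (Fin 4), S.card ≤ 1 → g S ≤ 6 := by decide
lemma gmax2 : ∀ S : Finset (Fin 4), S.card ≤ 2 → g S ≤ 7 := by decide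
lemma gmax3 : ∀ S : Finset (Fin 4), S.card ≤ 3 → g S ≤ 9 := by decide
lemma g0 : g ∅ = 0 := by decide
lemma g1 : g {0} = 6 := by decide
lemma g2 : ∀ j : Fin 4, j ≠ 0 → g {j} = 3 := by decide
lemma g3 : ∀ j : Fin 4, j ≠ 0 → g {0, j} = 7 := by decide
lemma g4 : ∀ i j : Fin 4, i ≠ 0 → j ≠ 0 → i ≠ j → g {i, j} = 6 := by decide
lemma g5 : g {1, 2, 3} = 9 := by decide
lemma g6 : ∀ S : Finset (Fin 4), S.card = 3 → (0 : Fin 4) ∈ S → g S = 8 := by decide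
lemma g7 : g (Finset.univ : Finset (Fin 4)) = 9 := by decide

/-- Elements `0,1,2,3` of `Fin 4` play the roles of `1,2,3,4` in the paper. -/
theorem stmt8 :
    ∃ f : Finset (Fin 4) → ℝ,
      Submodular f ∧ MonotoneF f ∧
      f ∅ = 0 ∧ f {0} = 1 ∧
      (∀ j : Fin 4, j ≠ 0 → f {j} = 1 / 2) ∧
      (∀ j : Fin 4, j ≠ 0 → f {0, j} = 7 / 6) ∧
      (∀ i j : Fin 4, i ≠ 0 → j ≠ 0 → i ≠ j → f {i, j} = 1) ∧
      f {1, 2, 3} = 3 / 2 ∧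
      (∀ S : Finset (Fin 4), S.card = 3 → (0 : Fin 4) ∈ S → f S = 4 / 3) ∧
      f Finset.univ = 3 / 2 ∧
      (∀ O₁ O₂ O₃ : Finset (Fin 4),
        (O₁.card = 1 ∧ ∀ S : Finset (Fin 4), S.card ≤ 1 → f S ≤ f O₁) →
        (O₂.card = 2 ∧ ∀ S : Finset (Fin 4), S.card ≤ 2 → f S ≤ f O₂) →
        (O₃.card = 3 ∧ ∀ S : Finset (Fin 4), S.card ≤ 3 → f S ≤ f O₃) →
        f O₃ - f O₂ > f O₂ - f O₁) := by
  refine ⟨fun S => (g S : ℝ) / 6, ?_, ?_, ?_, ?_, ?_, ?_, ?_, ?_, ?_, ?_, ?_⟩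
  · intro S T hST i hi
    have h := gsub S T hST i hi
    have h' : ((g (insert i T) : ℝ)) - g T ≤ (g (insert i S) : ℝ) - g S := by exact_mod_cast h
    simp only [ge_iff_le]
    linarith
  · intro S T hST
    have h : ((g S : ℝ)) ≤ g T := by exact_mod_cast gmono S T hST
    linarith
  · simp only []; rw [g0]; norm_num
  · simp only []; rw [g1]; norm_num
  · intro j hj; simp only []; rw [g2 j hj]; norm_num
  · intro j hj; simp only []; rw [g3 j hj]; norm_num
  · intro i j hi hj hij; simp only []; rw [g4 i j hi hj hij]; norm_num
  · simp only []; rw [g5]; norm_num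
  · intro S hc h0; simp only []; rw [g6 S hc h0]; norm_num
  · simp only []; rw [g7]; norm_num
  · rintro O₁ O₂ O₃ ⟨c₁, m₁⟩ ⟨c₂, m₂⟩ ⟨c₃, m₃⟩
    have e1 : (g O₁ : ℝ) / 6 = 1 := by
      have hu : ((g O₁ : ℝ)) ≤ 6 := by exact_mod_cast gmax1 O₁ (le_of_eq c₁)
      have hl := m₁ {0} (by decide)
      simp only [] at hl; rw [g1] at hl; push_cast at hl
      linarith
    have e2 : (g O₂ : ℝ) / 6 = 7 / 6 := by
      have hu : ((g O₂ : ℝ)) ≤ 7 := by exact_mod_cast gmax2 O₂ (le_of_eq c₂)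
      have hl := m₂ {0, 1} (by decide)
      simp only [] at hl; rw [g3 1 (by decide)] at hl; push_cast at hl
      linarith
    have e3 : (g O₃ : ℝ) / 6 = 3 / 2 := by
      have hu : ((g O₃ : ℝ)) ≤ 9 := by exact_mod_cast gmax3 O₃ (le_of_eq c₃)
      have hl := m₃ {1, 2, 3} (by decide)
      simp only [] at hl; rw [g5] at hl; push_cast at hl
      linarith
    simp only [e1, e2, e3]
    norm_num
end

section
/- For a monotone submodular function f with f(∅) = 0 and integers 0 < a ≤ b, if O_b is an optimal set of cardinality b, then f(O_b) ≤ (b/a)·f(O_a), where O_a is an optimal set of cardinality a. -/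
lemma sum_marg_le {V : Type*} [DecidableEq V] (f : Finset V → ℝ)
    (hsub : Submodular f) (S : Finset V) :
    ∑ x ∈ S, (f S - f (S.erase x)) ≤ f S - f ∅ := by
  induction S using Finset.induction_on with
  | empty => simp
  | insert _ _ hy _ =>
    rename_i y T ih
    rw [Finset.sum_insert hy, Finset.erase_insert hy]
    have hstep : ∀ x ∈ T, f (insert y T) - f ((insert y T).erase x)
        ≤ f T - f (T.erase x) := by
      intro x hx
      have hxS : x ∈ insert y T := Finset.mem_insert_of_mem hx
      have hsubset : T.erase x ⊆ (insert y T).erase x :=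
        Finset.erase_subset_erase x (Finset.subset_insert y T)
      have hxnot : x ∉ (insert y T).erase x := Finset.notMem_erase x _
      have := hsub (T.erase x) ((insert y T).erase x) hsubset x hxnot
      rw [Finset.insert_erase hx, Finset.insert_erase hxS] at this
      linarith
    have hsum : ∑ x ∈ T, (f (insert y T) - f ((insert y T).erase x))
        ≤ ∑ x ∈ T, (f T - f (T.erase x)) := Finset.sum_le_sum hstep
    linarith

lemma key_lemma {V : Type*} [DecidableEq V] (f : Finset V → ℝ)
    (hsub : Submodular f) (h0 : f ∅ = 0)
    (a : ℕ) (ha : 0 < a) (Oa : Finset V)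
    (hOaopt : ∀ S : Finset V, S.card ≤ a → f S ≤ f Oa) :
    ∀ n, a ≤ n → ∀ S : Finset V, S.card = n → (a : ℝ) * f S ≤ (n : ℝ) * f Oa := by
  intro n hn
  induction n, hn using Nat.le_induction with
  | base =>
    intro S hS
    have := hOaopt S (le_of_eq hS)
    have hA : (0:ℝ) ≤ (a:ℝ) := Nat.cast_nonneg a
    nlinarith
  | succ n hn ih =>
    intro S hS
    have hne : S.Nonempty := Finset.card_pos.mp (by omega)
    obtain ⟨x, hxS, hmax⟩ := S.exists_max_image (fun y => f (S.erase y)) hne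
    -- sum of marginals ≥ card • min marginal
    have hterm : ∀ y ∈ S, f S - f (S.erase x) ≤ f S - f (S.erase y) := by
      intro y hy
      have := hmax y hy
      linarith
    have hsmul : S.card • (f S - f (S.erase x)) ≤ ∑ y ∈ S, (f S - f (S.erase y)) :=
      Finset.card_nsmul_le_sum S _ _ hterm
    have hsum := sum_marg_le f hsub S
    rw [h0, sub_zero] at hsum
    rw [hS, nsmul_eq_mul] at hsmul
    push_cast at hsmul
    have h2 : ((n : ℝ) + 1) * (f S - f (S.erase x)) ≤ f S := le_trans hsmul hsum
    have hcard : (S.erase x).card = n := by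
      rw [Finset.card_erase_of_mem hxS, hS]; omega
    have h1 : (a : ℝ) * f (S.erase x) ≤ (n : ℝ) * f Oa := ih (S.erase x) hcard
    have hA : (0:ℝ) ≤ (a:ℝ) := Nat.cast_nonneg a
    have hApos : (0:ℝ) < (a:ℝ) := by exact_mod_cast ha
    have hnpos : (0:ℝ) < (n:ℝ) := by
      have : 0 < n := lt_of_lt_of_le ha hn
      exact_mod_cast this
    have hfin : (n:ℝ) * ((a:ℝ) * f S) ≤ (n:ℝ) * (((n:ℝ) + 1) * f Oa) := by
      nlinarith [mul_le_mul_of_nonneg_left h2 hA,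
        mul_le_mul_of_nonneg_left h1 (by positivity : (0:ℝ) ≤ (n:ℝ) + 1)]
    have := le_of_mul_le_mul_left hfin hnpos
    push_cast
    linarith

theorem stmt9 {V : Type*} [DecidableEq V] (f : Finset V → ℝ)
    (hsub : Submodular f) (hmono : MonotoneF f) (h0 : f ∅ = 0)
    (a b : ℕ) (ha : 0 < a) (hab : a ≤ b)
    (Oa Ob : Finset V)
    (hOa : Oa.card = a) (hOaopt : ∀ S : Finset V, S.card ≤ a → f S ≤ f Oa)
    (hOb : Ob.card = b) (hObopt : ∀ S : Finset V, S.card ≤ b → f S ≤ f Ob) :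
    f Ob ≤ ((b : ℝ) / a) * f Oa := by
  have hkey := key_lemma f hsub h0 a ha Oa hOaopt b hab Ob hOb
  have hApos : (0:ℝ) < (a:ℝ) := by exact_mod_cast ha
  rw [div_mul_eq_mul_div, le_div_iff₀ hApos]
  linarith [hkey]
end

section
/- For q = 50 and e = exp(1), define h(a) = ((1 - e^{-(a+q)/(q+1)})·(e/q) + (1 - e^{-(a-1)/(q+1)})) / (e/q + (a-1)/q) for a ≥ 1. Then h(a) < 0.8512 for all a ≥ 1. -/
open Real Finset

lemma exp_016_lt : Real.exp (4/25) < 1.1735110 := by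
  have h := Real.exp_bound (x := 4/25) (by rw [abs_of_nonneg] <;> norm_num) (n := 6) (by norm_num)
  rw [abs_of_nonneg (by norm_num : (0:ℝ) ≤ 4/25), abs_le] at h
  have h2 := h.2
  simp only [Finset.sum_range_succ, Finset.sum_range_zero, Nat.factorial] at h2
  norm_num at h2 ⊢
  linarith

lemma exp_0165_lt : Real.exp (33/200) < 1.1793932 := by
  have h := Real.exp_bound (x := 33/200) (by rw [abs_of_nonneg] <;> norm_num) (n := 6) (by norm_num)
  rw [abs_of_nonneg (by norm_num : (0:ℝ) ≤ 33/200), abs_le] at h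
  have h2 := h.2
  simp only [Finset.sum_range_succ, Finset.sum_range_zero, Nat.factorial] at h2
  norm_num at h2 ⊢
  linarith

lemma exp_0165_gt : Real.exp (33/200) > 1.17925 := by
  have h := Real.exp_bound (x := 33/200) (by rw [abs_of_nonneg] <;> norm_num) (n := 6) (by norm_num)
  rw [abs_of_nonneg (by norm_num : (0:ℝ) ≤ 33/200), abs_le] at h
  have h1 := h.1
  simp only [Finset.sum_range_succ, Finset.sum_range_zero, Nat.factorial] at h1
  norm_num at h1 ⊢
  linarith

lemma u1_ge : (0.852141 : ℝ) ≤ Real.exp (-(4/25)) := by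
  have hp := Real.exp_pos (4/25)
  rw [Real.exp_neg, ← one_div, le_div_iff₀ hp]
  nlinarith [exp_016_lt]

lemma u2_ge : (0.847892 : ℝ) ≤ Real.exp (-(33/200)) := by
  have hp := Real.exp_pos (33/200)
  rw [Real.exp_neg, ← one_div, le_div_iff₀ hp]
  nlinarith [exp_0165_lt]

lemma u2_le : Real.exp (-(33/200)) ≤ (0.848 : ℝ) := by
  have hp := Real.exp_pos (33/200)
  rw [Real.exp_neg, ← one_div, div_le_iff₀ hp]
  nlinarith [exp_0165_gt]

/-- Tangent line bound: exp(-t/51) ≥ exp(-t₀/51) * (1 + (t₀ - t)/51). -/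
lemma tangent (t t₀ : ℝ) :
    Real.exp (-(t₀/51)) * (1 + (t₀ - t)/51) ≤ Real.exp (-t/51) := by
  have h1 : Real.exp (-t/51) = Real.exp (-(t₀/51)) * Real.exp ((t₀ - t)/51) := by
    rw [← Real.exp_add]; congr 1; ring
  rw [h1]
  exact mul_le_mul_of_nonneg_left (by linarith [Real.add_one_le_exp ((t₀ - t)/51)])
    (Real.exp_pos _).le

theorem stmt16 (q e : ℝ) (hq : q = 50) (he : e = Real.exp 1)
    (h : ℝ → ℝ)
    (hh : h = fun a => ((1 - Real.exp (-(a + q) / (q + 1))) * (e / q) +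
      (1 - Real.exp (-(a - 1) / (q + 1)))) / (e / q + (a - 1) / q)) :
    ∀ a : ℝ, 1 ≤ a → h a < 0.8512 := by
  subst hq he hh
  intro a ha
  simp only
  have h51 : (50:ℝ) + 1 = 51 := by norm_num
  rw [h51]
  set E := Real.exp 1 with hE
  have hEpos : 0 < E := Real.exp_pos 1
  have hElt : E < 2.7182818286 := Real.exp_one_lt_d9
  have hEgt : 2.7182818283 < E := Real.exp_one_gt_d9
  have hden : (0:ℝ) < E / 50 + (a - 1) / 50 := by
    have h1 : (0:ℝ) ≤ a - 1 := by linarith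
    positivity
  rw [div_lt_iff₀ hden]
  set w := Real.exp (-(a + 50) / 51) with hw
  set v := Real.exp (-(a - 1) / 51) with hv
  have hwv : E * w = v := by
    rw [hw, hv, hE, ← Real.exp_add]; congr 1; ring
  have key : (1 - w) * (E / 50) + (1 - v) = E / 50 + 1 - 51 * v / 50 := by
    field_simp
    linarith [hwv]
  rw [key]
  have hveq : v = Real.exp (-(a-1)/51) := hv
  rcases le_or_gt (a - 1) 8.5 with hc | hc
  · -- tangent at t₀ = 8.16, exp(-8.16/51) = exp(-4/25)
    have htan := tangent (a - 1) 8.16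
    have he1 : Real.exp (-(8.16/51)) = Real.exp (-(4/25)) := by norm_num
    rw [he1, ← hveq] at htan
    have hu1 := u1_ge
    set u := Real.exp (-(4/25)) with hu
    have hprod : 0 ≤ (u - 0.8512) * (8.5 - (a - 1)) :=
      mul_nonneg (by linarith) (by linarith)
    nlinarith [htan, hprod, hu1, hElt, hc]
  · -- tangent at t₀ = 8.415, exp(-8.415/51) = exp(-33/200)
    have htan := tangent (a - 1) 8.415
    have he2 : Real.exp (-(8.415/51)) = Real.exp (-(33/200)) := by norm_num
    rw [he2, ← hveq] at htan
    have hu2 := u2_ge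
    have hu2' := u2_le
    set u := Real.exp (-(33/200)) with hu
    have hprod : 0 ≤ (0.8512 - u) * ((a - 1) - 8.5) :=
      mul_nonneg (by linarith) (by linarith)
    nlinarith [htan, hprod, hu2, hElt, hc]
end

section
/- Let 0 < ρ < 1 and ρ ≤ c ≤ 1 with (1 - ρ/c)/(1 - ρ) ≤ 1 - e^{-1}. If τ ∈ [0, 1] satisfies 1 - e^{-τ} ≤ (1 - ρ/c)/(1 - ρ), then (1 - e^{ρτ - ρ})/c + e^{ρτ - ρ}·(1 - ρ/c)/(1 - ρ) ≥ (1 - e^{-ρ}·((1-ρ)/(ρ(1/c - 1)))^ρ)/c + e^{-ρ}·((1-ρ)/(ρ(1/c - 1)))^ρ·(1 - ρ/c)/(1 - ρ). -/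
theorem stmt18 (ρ c : ℝ) (hρ0 : 0 < ρ) (hρ1 : ρ < 1) (hc1 : ρ ≤ c) (hc2 : c ≤ 1)
    (hcase : (1 - ρ / c) / (1 - ρ) ≤ 1 - Real.exp (-1))
    (τ : ℝ) (hτ0 : 0 ≤ τ) (hτ1 : τ ≤ 1)
    (hτ : 1 - Real.exp (-τ) ≤ (1 - ρ / c) / (1 - ρ)) :
    (1 - Real.exp (ρ * τ - ρ)) / c + Real.exp (ρ * τ - ρ) * ((1 - ρ / c) / (1 - ρ)) ≥
      (1 - Real.exp (-ρ) * ((1 - ρ) / (ρ * (1 / c - 1))) ^ ρ) / c +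
      Real.exp (-ρ) * ((1 - ρ) / (ρ * (1 / c - 1))) ^ ρ * ((1 - ρ / c) / (1 - ρ)) := by
  have hc0 : 0 < c := lt_of_lt_of_le hρ0 hc1
  have h1ρ : (0:ℝ) < 1 - ρ := by linarith
  rcases eq_or_lt_of_le hc2 with hc | hc
  · subst hc
    simp [Real.zero_rpow hρ0.ne', div_self h1ρ.ne']
  · -- c < 1
    set M : ℝ := (1 - ρ) / (ρ * (1 / c - 1)) with hM
    have hden : 0 < ρ * (1 / c - 1) := by
      apply mul_pos hρ0
      have : 1 < 1 / c := (one_lt_one_div hc0 hc)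
      linarith
    have hMpos : 0 < M := div_pos h1ρ hden
    -- 1 - D = 1/M
    have hkey : 1 - (1 - ρ / c) / (1 - ρ) = 1 / M := by
      rw [hM, one_div_div]
      field_simp
      ring
    have hexpτ : Real.exp τ ≤ M := by
      have h1 : 1 / M ≤ 1 / Real.exp τ := by
        rw [one_div (Real.exp τ), ← Real.exp_neg, ← hkey]; linarith
      rw [div_le_div_iff₀ hMpos (Real.exp_pos τ)] at h1
      linarith
    have hAB : Real.exp (ρ * τ - ρ) ≤ Real.exp (-ρ) * M ^ ρ := by
      have : Real.exp (ρ * τ) ≤ M ^ ρ := by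
        rw [mul_comm, Real.exp_mul]
        exact Real.rpow_le_rpow (Real.exp_pos τ).le hexpτ hρ0.le
      calc Real.exp (ρ * τ - ρ) = Real.exp (-ρ) * Real.exp (ρ * τ) := by
            rw [← Real.exp_add]; ring_nf
        _ ≤ Real.exp (-ρ) * M ^ ρ := by
            exact mul_le_mul_of_nonneg_left this (Real.exp_pos _).le
    have hD : (1 - ρ / c) / (1 - ρ) ≤ 1 / c := by
      rw [div_le_div_iff₀ h1ρ hc0]
      have : ρ / c * c = ρ := div_mul_cancel₀ ρ hc0.ne'
      nlinarith
    set A := Real.exp (ρ * τ - ρ)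
    set B := Real.exp (-ρ) * M ^ ρ
    have hfac : 0 ≤ (B - A) * (1 / c - (1 - ρ / c) / (1 - ρ)) :=
      mul_nonneg (by linarith) (by linarith)
    have h1c : (1 - A) / c = (1 - A) * (1/c) := by ring
    have h2c : (1 - B) / c = (1 - B) * (1/c) := by ring
    rw [ge_iff_le, h1c, h2c]
    nlinarith [hfac]
end

section
/- Let 0 < ρ₁ < ... < ρ_m (with ρ₀ = 0) and β₁, ..., β_m > 0 satisfy βᵢ/(ρᵢ - ρᵢ₋₁) ≥ βᵢ₊₁/(ρᵢ₊₁ - ρᵢ) for all i < m. Then for every budget fraction b with ρ_{i-1} ≤ b ≤ ρᵢ, the maximum of Σⱼ βⱼ min(xⱼ/(ρⱼ - ρⱼ₋₁), 1) over nonnegative x₁, ..., x_m with Σⱼ xⱼ = b equals Σ_{j<i} βⱼ + βᵢ·(b - ρ_{i-1})/(ρᵢ - ρᵢ₋₁). -/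
theorem stmt19 (m : ℕ) (hm : 1 ≤ m) (ρ : ℕ → ℝ) (hρ0 : ρ 0 = 0)
    (hρmono : ∀ i : ℕ, i < m → ρ i < ρ (i + 1))
    (β : ℕ → ℝ) (hβpos : ∀ j : ℕ, 1 ≤ j → j ≤ m → 0 < β j)
    (hβdec : ∀ j : ℕ, 1 ≤ j → j < m →
      β j / (ρ j - ρ (j - 1)) ≥ β (j + 1) / (ρ (j + 1) - ρ j))
    (i : ℕ) (hi1 : 1 ≤ i) (him : i ≤ m)
    (b : ℝ) (hb1 : ρ (i - 1) ≤ b) (hb2 : b ≤ ρ i) :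
    IsGreatest
      {v : ℝ | ∃ x : ℕ → ℝ, (∀ j, 0 ≤ x j) ∧ (∑ j ∈ Finset.Icc 1 m, x j = b) ∧
        v = ∑ j ∈ Finset.Icc 1 m, β j * min (x j / (ρ j - ρ (j - 1))) 1}
      (∑ j ∈ Finset.Icc 1 (i - 1), β j + β i * (b - ρ (i - 1)) / (ρ i - ρ (i - 1))) := by
  classical
  -- positivity of gaps
  have hδ : ∀ j : ℕ, 1 ≤ j → j ≤ m → 0 < ρ j - ρ (j - 1) := by
    intro j hj1 hjm
    have h := hρmono (j - 1) (by omega)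
    have hjj : j - 1 + 1 = j := by omega
    rw [hjj] at h
    linarith
  -- monotonicity of ratios
  have hratio : ∀ j k : ℕ, 1 ≤ j → j ≤ k → k ≤ m →
      β k / (ρ k - ρ (k - 1)) ≤ β j / (ρ j - ρ (j - 1)) := by
    intro j k hj hjk hkm
    induction k with
    | zero => omega
    | succ n ih =>
      rcases Nat.lt_or_ge j (n + 1) with h | h
      · have h1 := ih (by omega) (by omega)
        have h2 := hβdec n (by omega) (by omega)
        have hn : n + 1 - 1 = n := by omega
        rw [hn]
        calc β (n + 1) / (ρ (n + 1) - ρ n) ≤ β n / (ρ n - ρ (n - 1)) := h2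
        _ ≤ β j / (ρ j - ρ (j - 1)) := h1
      · have : j = n + 1 := by omega
        subst this
        exact le_refl _
  -- telescoping sum
  have htel : ∀ k : ℕ, k ≤ m → ∑ j ∈ Finset.Icc 1 k, (ρ j - ρ (j - 1)) = ρ k := by
    intro k
    induction k with
    | zero => simp [hρ0]
    | succ n ih =>
      intro h
      rw [Finset.sum_Icc_succ_top (by omega), ih (by omega)]
      have hn : n + 1 - 1 = n := by omega
      rw [hn]; ring
  -- splitting a sum over Icc 1 m at i
  have hsplit : ∀ f : ℕ → ℝ, ∑ j ∈ Finset.Icc 1 m, f j =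
      ∑ j ∈ Finset.Icc 1 (i - 1), f j + f i + ∑ j ∈ Finset.Ioc i m, f j := by
    intro f
    have e1 : Finset.Icc 1 m = Finset.Ioc 0 m := Finset.Icc_add_one_left_eq_Ioc 0 m
    have e2 : Finset.Icc 1 (i - 1) = Finset.Ioc 0 (i - 1) := Finset.Icc_add_one_left_eq_Ioc 0 (i - 1)
    have e3 : Finset.Ioc (i - 1) i = {i} := by
      have h4 : i = (i - 1) + 1 := by omega
      rw [h4]; exact Nat.Ioc_succ_singleton (i - 1)
    rw [e1, e2, ← Finset.sum_Ioc_consecutive f (Nat.zero_le (i - 1)) (by omega : i - 1 ≤ m),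
        ← Finset.sum_Ioc_consecutive f (by omega : i - 1 ≤ i) him, e3, Finset.sum_singleton]
    ring
  have hδi := hδ i hi1 him
  have hβi := hβpos i hi1 him
  constructor
  · -- membership: exhibit the greedy solution
    set x : ℕ → ℝ := fun j => if 1 ≤ j ∧ j < i then ρ j - ρ (j - 1)
      else if j = i then b - ρ (i - 1) else 0 with hxdef
    have hxval : ∀ j, x j = if 1 ≤ j ∧ j < i then ρ j - ρ (j - 1)
        else if j = i then b - ρ (i - 1) else 0 := fun j => rfl
    have hxi : x i = b - ρ (i - 1) := by
      rw [hxval i, if_neg (by omega), if_pos rfl]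
    refine ⟨x, ?_, ?_, ?_⟩
    · intro j
      rw [hxval j]
      by_cases h1 : 1 ≤ j ∧ j < i
      · rw [if_pos h1]
        exact le_of_lt (hδ j h1.1 (by omega))
      · rw [if_neg h1]
        by_cases h2 : j = i
        · rw [if_pos h2]; linarith
        · rw [if_neg h2]
    · rw [hsplit]
      have p1 : ∑ j ∈ Finset.Icc 1 (i - 1), x j = ρ (i - 1) := by
        rw [← htel (i - 1) (by omega)]
        apply Finset.sum_congr rfl
        intro j hj
        simp only [Finset.mem_Icc] at hj
        rw [hxval j, if_pos ⟨hj.1, by omega⟩]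
      have p2 : ∑ j ∈ Finset.Ioc i m, x j = 0 := by
        apply Finset.sum_eq_zero
        intro j hj
        simp only [Finset.mem_Ioc] at hj
        rw [hxval j, if_neg (by omega), if_neg (by omega)]
      rw [p1, p2, hxi]
      ring
    · rw [hsplit]
      have p1 : ∑ j ∈ Finset.Icc 1 (i - 1), β j * min (x j / (ρ j - ρ (j - 1))) 1
          = ∑ j ∈ Finset.Icc 1 (i - 1), β j := by
        apply Finset.sum_congr rfl
        intro j hj
        simp only [Finset.mem_Icc] at hj
        rw [hxval j, if_pos ⟨hj.1, by omega⟩, div_self (hδ j hj.1 (by omega)).ne',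
          min_self, mul_one]
      have p2 : ∑ j ∈ Finset.Ioc i m, β j * min (x j / (ρ j - ρ (j - 1))) 1 = 0 := by
        apply Finset.sum_eq_zero
        intro j hj
        simp only [Finset.mem_Ioc] at hj
        rw [hxval j, if_neg (by omega), if_neg (by omega), zero_div,
          min_eq_left (by norm_num : (0:ℝ) ≤ 1), mul_zero]
      rw [p1, p2, hxi]
      have hmin : min ((b - ρ (i - 1)) / (ρ i - ρ (i - 1))) 1
          = (b - ρ (i - 1)) / (ρ i - ρ (i - 1)) := by
        apply min_eq_left
        rw [div_le_one hδi]
        linarith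
      rw [hmin]
      ring
  · -- upper bound
    rintro v ⟨x, hx0, hxs, rfl⟩
    set c : ℝ := β i / (ρ i - ρ (i - 1)) with hc
    have hcpos : 0 < c := div_pos hβi hδi
    have key : ∀ j ∈ Finset.Icc 1 m,
        β j * min (x j / (ρ j - ρ (j - 1))) 1 ≤
          c * x j + (if j ≤ i - 1 then β j - c * (ρ j - ρ (j - 1)) else 0) := by
      intro j hj
      simp only [Finset.mem_Icc] at hj
      have hδj := hδ j hj.1 hj.2
      have hβj := hβpos j hj.1 hj.2
      have hxj : c * x j = c * (x j / (ρ j - ρ (j - 1))) * (ρ j - ρ (j - 1)) := by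
        rw [mul_assoc, div_mul_cancel₀ _ hδj.ne']
      have htnn : 0 ≤ x j / (ρ j - ρ (j - 1)) := div_nonneg (hx0 j) hδj.le
      rcases le_or_gt j (i - 1) with hcase | hcase
      · -- j < i : ratio at least c
        rw [if_pos hcase]
        have hr : c ≤ β j / (ρ j - ρ (j - 1)) := hratio j i hj.1 (by omega) him
        have hcb : c * (ρ j - ρ (j - 1)) ≤ β j := by
          rw [le_div_iff₀ hδj] at hr
          linarith
        rcases min_cases (x j / (ρ j - ρ (j - 1))) 1 with ⟨hmin, hle⟩ | ⟨hmin, hle⟩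
        · rw [hmin, hxj]
          have h1 : 0 ≤ (β j - c * (ρ j - ρ (j - 1))) * (1 - x j / (ρ j - ρ (j - 1))) :=
            mul_nonneg (by linarith) (by linarith)
          nlinarith [h1]
        · rw [hmin, mul_one, hxj]
          have h1 : 0 ≤ c * (ρ j - ρ (j - 1)) * (x j / (ρ j - ρ (j - 1)) - 1) :=
            mul_nonneg (mul_nonneg hcpos.le hδj.le) (by linarith)
          nlinarith [h1]
      · -- j ≥ i : ratio at most c
        rw [if_neg (by omega), add_zero]
        have hr : β j / (ρ j - ρ (j - 1)) ≤ c := hratio i j hi1 (by omega) hj.2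
        have hcb : β j ≤ c * (ρ j - ρ (j - 1)) := by
          rw [div_le_iff₀ hδj] at hr
          linarith
        rcases min_cases (x j / (ρ j - ρ (j - 1))) 1 with ⟨hmin, hle⟩ | ⟨hmin, hle⟩
        · rw [hmin, hxj]
          have h1 : 0 ≤ (c * (ρ j - ρ (j - 1)) - β j) * (x j / (ρ j - ρ (j - 1))) :=
            mul_nonneg (by linarith) htnn
          nlinarith [h1]
        · rw [hmin, mul_one, hxj]
          have h1 : 0 ≤ c * (ρ j - ρ (j - 1)) * (x j / (ρ j - ρ (j - 1)) - 1) :=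
            mul_nonneg (mul_nonneg hcpos.le hδj.le) (by linarith)
          nlinarith [h1]
    calc ∑ j ∈ Finset.Icc 1 m, β j * min (x j / (ρ j - ρ (j - 1))) 1
        ≤ ∑ j ∈ Finset.Icc 1 m,
            (c * x j + (if j ≤ i - 1 then β j - c * (ρ j - ρ (j - 1)) else 0)) :=
          Finset.sum_le_sum key
    _ = c * b + ∑ j ∈ Finset.Icc 1 m,
          (if j ≤ i - 1 then β j - c * (ρ j - ρ (j - 1)) else 0) := by
        rw [Finset.sum_add_distrib, ← Finset.mul_sum, hxs]
    _ = c * b + ∑ j ∈ Finset.Icc 1 (i - 1), (β j - c * (ρ j - ρ (j - 1))) := by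
        congr 1
        rw [← Finset.sum_filter]
        apply Finset.sum_congr
        · ext j
          simp only [Finset.mem_filter, Finset.mem_Icc]
          omega
        · intros; rfl
    _ = c * b + (∑ j ∈ Finset.Icc 1 (i - 1), β j - c * ρ (i - 1)) := by
        rw [Finset.sum_sub_distrib, ← Finset.mul_sum, htel (i - 1) (by omega)]
    _ = ∑ j ∈ Finset.Icc 1 (i - 1), β j + β i * (b - ρ (i - 1)) / (ρ i - ρ (i - 1)) := by
        rw [hc]
        field_simp
        ring
end
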